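/- If the one-step expansion p_{ij}(t) = p_j(1 + ∑_{k≥1} e^{-tζ_k} u_i^{(k)} u_j^{(k)}) holds with ∑_i u_i^{(k)} u_i^{(l)} p_i = δ_{kl}, then the N-fold product chain on compositions x with |x|=N has transition function p(x,y;t) = m(y;p)(1 + ∑_{0<|n|≤N} e^{-t∑_i n_i ζ_i} multinomial(N;n)^{-1} Q_n(x;u) Q_n(y;u)), where Q_n are the multivariate Krawtchouk polynomials with basis u. (Finite version: d states, finitely many eigenvalues ζ_1,…,ζ_{d-1} > 0.) -/

import Mathlib

open MvPolynomial

/-- Multinomial probability `m(x;p)` (when `|x| = N`). -/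
noncomputable def multinomialPMF (d : ℕ) (p : Fin d → ℝ) (x : Fin d → ℕ) : ℝ :=
  (Nat.multinomial Finset.univ x : ℝ) * ∏ j, p j ^ x j

/-- Multivariate Krawtchouk polynomial `Q_n(x;u)`. -/
noncomputable def QK (d : ℕ) [NeZero d] (u : Fin d → Fin d → ℝ) (n x : Fin d → ℕ) : ℝ :=
  MvPolynomial.coeff (Finsupp.equivFunOnFinite.symm n)
    (∏ j, (1 + ∑ l ∈ Finset.univ.erase 0, MvPolynomial.X l * MvPolynomial.C (u l j)) ^ x j)

/-- One-step transition function `p_{ij}(t) = p_j ∑_k e^{-tζ_k} u_i^{(k)} u_j^{(k)}`. -/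
noncomputable def oneStep (d : ℕ) (p : Fin d → ℝ) (u : Fin d → Fin d → ℝ)
    (ζ : Fin d → ℝ) (t : ℝ) (i j : Fin d) : ℝ :=
  p j * ∑ k, Real.exp (-t * ζ k) * u k i * u k j

/-- Transition function of the `N`-fold composition chain: the coefficient of
`∏_j s_j^{y_j}` in `∏_i (∑_j p_{ij}(t) s_j)^{x_i}`. -/
noncomputable def compTrans (d : ℕ) (p : Fin d → ℝ) (u : Fin d → Fin d → ℝ)
    (ζ : Fin d → ℝ) (t : ℝ) (x y : Fin d → ℕ) : ℝ :=
  MvPolynomial.coeff (Finsupp.equivFunOnFinite.symm y)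
    (∏ i, (∑ j, MvPolynomial.C (oneStep d p u ζ t i j) * MvPolynomial.X j) ^ x i)

section Aux
open Finset
open scoped Nat
variable {d : ℕ}

lemma prod_monomial' {α : Type*} (s : Finset α) (f : α → (Fin d →₀ ℕ)) (r : α → ℝ) :
    ∏ k ∈ s, (monomial (f k) (r k) : MvPolynomial (Fin d) ℝ)
      = monomial (∑ k ∈ s, f k) (∏ k ∈ s, r k) := by
  induction s using Finset.cons_induction with
  | empty => simp [monomial_zero']
  | cons a s ha ih => simp [Finset.prod_cons, Finset.sum_cons, ih, monomial_mul]

lemma fs_apply (y : Fin d → ℕ) (j : Fin d) : (Finsupp.equivFunOnFinite.symm y) j = y j := rfl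

lemma degree_eq_sum_univ (n : Fin d →₀ ℕ) : n.degree = ∑ j, n j :=
  Finset.sum_subset (Finset.subset_univ _) (by intro x _ h; simpa using h)

lemma fs_degree (y : Fin d → ℕ) : (Finsupp.equivFunOnFinite.symm y).degree = ∑ j, y j :=
  degree_eq_sum_univ _

-- homogeneity of Dgen
lemma Dgen_homog [NeZero d] (c : Fin d → Fin d → ℝ) (x : Fin d → ℕ) :
    (∏ j, (∑ k, C (c k j) * X k : MvPolynomial (Fin d) ℝ) ^ x j).IsHomogeneous (∑ j, x j) := by
  apply MvPolynomial.IsHomogeneous.prod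
  intro j _
  simpa using (MvPolynomial.IsHomogeneous.sum Finset.univ _ 1
    (fun k _ => MvPolynomial.isHomogeneous_C_mul_X (c k j) k)).pow (x j)

lemma aeval_scale_monomial (e : Fin d → ℝ) (n : Fin d →₀ ℕ) (a : ℝ) :
    aeval (fun k => (C (e k) * X k : MvPolynomial (Fin d) ℝ)) (monomial n a)
      = monomial n (a * ∏ k, e k ^ n k) := by
  rw [aeval_monomial]
  rw [Finsupp.prod_fintype _ _ (fun i => pow_zero _)]
  have h1 : ∀ k : Fin d, (C (e k) * X k : MvPolynomial (Fin d) ℝ) ^ n k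
      = C (e k ^ n k) * X k ^ n k := by
    intro k; rw [mul_pow, C_pow]
  simp_rw [h1]
  rw [Finset.prod_mul_distrib, ← map_prod]
  have h2 : (∏ k, (X k : MvPolynomial (Fin d) ℝ) ^ n k) = monomial n 1 := by
    rw [monomial_eq, map_one, one_mul, Finsupp.prod_fintype _ _ (fun i => pow_zero _)]
  rw [h2]
  rw [algebraMap_eq]
  rw [mul_comm (C a) _, mul_assoc, mul_comm ((monomial n) 1) (C a), C_mul_monomial, mul_one,
    C_mul_monomial]
  ring_nf

lemma coeff_aeval_scale (e : Fin d → ℝ) (F : MvPolynomial (Fin d) ℝ) (m : Fin d →₀ ℕ) :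
    coeff m (aeval (fun k => (C (e k) * X k : MvPolynomial (Fin d) ℝ)) F)
      = (∏ k, e k ^ m k) * coeff m F := by
  conv_lhs => rw [F.as_sum, map_sum]
  rw [coeff_sum]
  simp_rw [aeval_scale_monomial, coeff_monomial]
  rw [Finset.sum_ite_eq' F.support m (fun n => coeff n F * ∏ k, e k ^ n k)]
  by_cases hm : m ∈ F.support
  · rw [if_pos hm, mul_comm]
  · rw [if_neg hm, MvPolynomial.notMem_support_iff.mp hm, mul_zero]

lemma aeval_dehom_monomial [NeZero d] (n : Fin d →₀ ℕ) (a : ℝ) :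
    aeval (fun k => if k = 0 then (1 : MvPolynomial (Fin d) ℝ) else X k) (monomial n a)
      = monomial (n.erase 0) a := by
  rw [aeval_monomial]
  rw [Finsupp.prod_fintype _ _ (fun i => pow_zero _)]
  have h1 : ∀ i : Fin d, ((if i = 0 then (1 : MvPolynomial (Fin d) ℝ) else X i)) ^ n i
      = X i ^ (n.erase 0) i := by
    intro i
    by_cases hi : i = 0
    · subst hi; simp [Finsupp.erase_same]
    · simp [hi, Finsupp.erase_ne hi]
  simp_rw [h1]
  have h2 : (∏ i, (X i : MvPolynomial (Fin d) ℝ) ^ (n.erase 0) i) = monomial (n.erase 0) 1 := by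
    rw [monomial_eq, map_one, one_mul, Finsupp.prod_fintype _ _ (fun i => pow_zero _)]
  rw [h2, algebraMap_eq, C_mul_monomial, mul_one]

lemma coeff_dehom [NeZero d] {F : MvPolynomial (Fin d) ℝ} {D : ℕ} (hF : F.IsHomogeneous D)
    (m : Fin d →₀ ℕ) (h0 : m 0 = 0) (hle : m.degree ≤ D) :
    coeff m (aeval (fun k => if k = 0 then (1 : MvPolynomial (Fin d) ℝ) else X k) F)
      = coeff (m + Finsupp.single 0 (D - m.degree)) F := by
  set n₀ : Fin d →₀ ℕ := m + Finsupp.single 0 (D - m.degree) with hn₀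
  conv_lhs => rw [F.as_sum, map_sum]
  rw [coeff_sum]
  simp_rw [aeval_dehom_monomial, coeff_monomial]
  have herase : n₀.erase 0 = m := by
    ext j
    by_cases hj : j = 0
    · subst hj; simp [Finsupp.erase_same, h0]
    · simp [Finsupp.erase_ne hj, hn₀, Finsupp.single_eq_of_ne' (Ne.symm hj)]
  rw [Finset.sum_eq_single n₀]
  · rw [if_pos herase]
  · intro n hn hne
    rw [if_neg]
    intro hem
    apply hne
    have hdeg : n.degree = D := by
      by_contra hne'
      exact (MvPolynomial.mem_support_iff.mp hn) (hF.coeff_eq_zero hne')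
    have hn0 : n 0 = D - m.degree := by
      have h3 : n.degree = m.degree + n 0 := by
        rw [degree_eq_sum_univ, degree_eq_sum_univ]
        rw [← Finset.add_sum_erase _ n (Finset.mem_univ 0),
            ← Finset.add_sum_erase _ m (Finset.mem_univ 0), h0, zero_add, add_comm]
        congr 1
        apply Finset.sum_congr rfl
        intro j hj
        rw [← hem, Finsupp.erase_ne (Finset.mem_erase.mp hj).1]
      omega
    ext j
    by_cases hj : j = 0
    · subst hj; simp [hn₀, h0, hn0]
    · have : n j = m j := by rw [← hem, Finsupp.erase_ne hj]
      rw [this, hn₀]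
      simp [Finsupp.single_eq_of_ne' (Ne.symm hj)]
  · intro hn
    rw [MvPolynomial.notMem_support_iff.mp hn, if_pos herase]

lemma multinomial_equiv {α β : Type*} [Fintype α] [Fintype β] [DecidableEq α] [DecidableEq β]
    (e : α ≃ β) (f : β → ℕ) :
    Nat.multinomial Finset.univ (f ∘ e) = Nat.multinomial Finset.univ f := by
  unfold Nat.multinomial
  rw [Fintype.sum_equiv e (fun a => (f ∘ e) a) f (fun a => rfl),
    Fintype.prod_equiv e (fun a => ((f ∘ e) a)!) (fun b => (f b)!) (fun a => rfl)]

lemma mult_matrix [NeZero d] (m : Fin d → Fin d → ℕ) :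
    Nat.multinomial Finset.univ (fun k => ∑ j, m k j) * ∏ k, Nat.multinomial Finset.univ (m k)
      = Nat.multinomial (Finset.univ : Finset (Fin d × Fin d)) (fun kj => m kj.1 kj.2) := by
  have hpos : 0 < ∏ k, ∏ j, (m k j)! :=
    Finset.prod_pos fun _ _ => Finset.prod_pos fun _ _ => Nat.factorial_pos _
  apply Nat.eq_of_mul_eq_mul_left hpos
  have hrhs : (∏ k, ∏ j, (m k j)!) *
      Nat.multinomial (Finset.univ : Finset (Fin d × Fin d)) (fun kj => m kj.1 kj.2)
      = (∑ k, ∑ j, m k j)! := by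
    have := Nat.multinomial_spec (Finset.univ : Finset (Fin d × Fin d)) (fun kj => m kj.1 kj.2)
    rwa [Fintype.prod_prod_type, Fintype.sum_prod_type] at this
  rw [hrhs]
  calc (∏ k, ∏ j, (m k j)!) *
      (Nat.multinomial Finset.univ (fun k => ∑ j, m k j) * ∏ k, Nat.multinomial Finset.univ (m k))
      = (∏ k, (∏ j, (m k j)!) * Nat.multinomial Finset.univ (m k)) *
          Nat.multinomial Finset.univ (fun k => ∑ j, m k j) := by
        rw [Finset.prod_mul_distrib]; ring
    _ = (∏ k, (∑ j, m k j)!) * Nat.multinomial Finset.univ (fun k => ∑ j, m k j) := by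
        simp_rw [Nat.multinomial_spec]
    _ = (∑ k, ∑ j, m k j)! := Nat.multinomial_spec _ _

lemma sum_single_eq_fs (m : Fin d → ℕ) :
    (∑ j, Finsupp.single j (m j)) = Finsupp.equivFunOnFinite.symm m := by
  ext i
  rw [Finsupp.finset_sum_apply]
  simp [Finsupp.single_apply, fs_apply]

lemma coeff_prod_linpow [NeZero d] (c : Fin d → Fin d → ℝ) (n y : Fin d → ℕ) :
    MvPolynomial.coeff (Finsupp.equivFunOnFinite.symm y)
        (∏ k, (∑ j, C (c k j) * X j : MvPolynomial (Fin d) ℝ) ^ n k)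
      = ∑ m ∈ Fintype.piFinset (fun k => Finset.piAntidiag Finset.univ (n k)),
          if (fun j => ∑ k, m k j) = y then
            (∏ k, (Nat.multinomial Finset.univ (m k) : ℝ)) * ∏ k, ∏ j, c k j ^ m k j
          else 0 := by
  have hpow : ∀ k, ((∑ j, C (c k j) * X j : MvPolynomial (Fin d) ℝ) ^ n k)
      = ∑ m ∈ Finset.piAntidiag Finset.univ (n k),
          monomial (Finsupp.equivFunOnFinite.symm m)
            ((Nat.multinomial Finset.univ m : ℝ) * ∏ j, c k j ^ m j) := by
    intro k
    rw [Finset.sum_pow_eq_sum_piAntidiag]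
    apply Finset.sum_congr rfl
    intro m hm
    have h1 : ∀ j : Fin d, (C (c k j) * X j : MvPolynomial (Fin d) ℝ) ^ m j
        = monomial (Finsupp.single j (m j)) (c k j ^ m j) := by
      intro j
      rw [mul_pow, ← C_pow, X_pow_eq_monomial, C_mul_monomial, mul_one]
    simp_rw [h1]
    rw [prod_monomial', sum_single_eq_fs]
    have h2 : ((Nat.multinomial Finset.univ m : ℕ) : MvPolynomial (Fin d) ℝ)
        = C ((Nat.multinomial Finset.univ m : ℕ) : ℝ) := by
      simp
    rw [h2, C_mul_monomial]
  simp_rw [hpow]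
  rw [Finset.prod_univ_sum, coeff_sum]
  apply Finset.sum_congr rfl
  intro m hm
  rw [prod_monomial', coeff_monomial]
  have hsum : (∑ k, Finsupp.equivFunOnFinite.symm (m k))
      = Finsupp.equivFunOnFinite.symm (fun j => ∑ k, m k j) := by
    ext i
    rw [Finsupp.finset_sum_apply]
    rfl
  rw [hsum]
  rw [if_congr (EmbeddingLike.apply_eq_iff_eq Finsupp.equivFunOnFinite.symm)
    (Finset.prod_mul_distrib) rfl]

lemma dual_coeff [NeZero d] (c : Fin d → Fin d → ℝ) (n y : Fin d → ℕ)
    (h : ∑ k, n k = ∑ j, y j) :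
    (Nat.multinomial Finset.univ n : ℝ) * MvPolynomial.coeff (Finsupp.equivFunOnFinite.symm y)
        (∏ k, (∑ j, C (c k j) * X j : MvPolynomial (Fin d) ℝ) ^ n k)
      = (Nat.multinomial Finset.univ y : ℝ) * MvPolynomial.coeff (Finsupp.equivFunOnFinite.symm n)
        (∏ j, (∑ k, C (c k j) * X k : MvPolynomial (Fin d) ℝ) ^ y j) := by
  rw [coeff_prod_linpow, coeff_prod_linpow (fun j k => c k j) y n]
  rw [Finset.mul_sum, Finset.mul_sum]
  simp_rw [mul_ite, mul_zero]
  rw [← Finset.sum_filter, ← Finset.sum_filter]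
  refine Finset.sum_nbij' (fun m => fun j k => m k j) (fun m => fun k j => m j k) ?_ ?_ ?_ ?_ ?_
  · intro m hm
    rw [Finset.mem_filter, Fintype.mem_piFinset] at hm ⊢
    obtain ⟨hm1, hm2⟩ := hm
    constructor
    · intro j
      rw [Finset.mem_piAntidiag]
      exact ⟨congrFun hm2 j, fun i _ => Finset.mem_univ i⟩
    · funext k
      have := hm1 k
      rw [Finset.mem_piAntidiag] at this
      exact this.1
  · intro m hm
    rw [Finset.mem_filter, Fintype.mem_piFinset] at hm ⊢
    obtain ⟨hm1, hm2⟩ := hm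
    constructor
    · intro k
      rw [Finset.mem_piAntidiag]
      exact ⟨congrFun hm2 k, fun i _ => Finset.mem_univ i⟩
    · funext j
      have := hm1 j
      rw [Finset.mem_piAntidiag] at this
      exact this.1
  · intro m _; rfl
  · intro m _; rfl
  · intro m hm
    rw [Finset.mem_filter, Fintype.mem_piFinset] at hm
    obtain ⟨hm1, hm2⟩ := hm
    have hrow : ∀ k, ∑ j, m k j = n k := by
      intro k
      have := hm1 k
      rw [Finset.mem_piAntidiag] at this
      exact this.1
    have hcol : ∀ j, ∑ k, m k j = y j := fun j => congrFun hm2 j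
    have hnat1 : Nat.multinomial Finset.univ n * ∏ k, Nat.multinomial Finset.univ (m k)
        = Nat.multinomial (Finset.univ : Finset (Fin d × Fin d)) (fun kj => m kj.1 kj.2) := by
      rw [← mult_matrix m]
      congr 1
      congr 1
      funext k
      exact (hrow k).symm
    have hnat2 : Nat.multinomial Finset.univ y * ∏ j, Nat.multinomial Finset.univ (fun k => m k j)
        = Nat.multinomial (Finset.univ : Finset (Fin d × Fin d)) (fun kj => m kj.1 kj.2) := by
      have h1 := mult_matrix (fun j k => m k j)
      rw [show (fun j => ∑ k, m k j) = y from hm2] at h1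
      rw [h1]
      exact multinomial_equiv (Equiv.prodComm (Fin d) (Fin d)) (fun kj => m kj.1 kj.2)
    have hc : (∏ k, ∏ j, c k j ^ m k j) = ∏ j, ∏ k, c k j ^ m k j := Finset.prod_comm
    calc (Nat.multinomial Finset.univ n : ℝ)
          * ((∏ k, (Nat.multinomial Finset.univ (m k) : ℝ)) * ∏ k, ∏ j, c k j ^ m k j)
        = ((Nat.multinomial Finset.univ n * ∏ k, Nat.multinomial Finset.univ (m k) : ℕ) : ℝ)
            * ∏ k, ∏ j, c k j ^ m k j := by push_cast; ring
      _ = ((Nat.multinomial Finset.univ y * ∏ j, Nat.multinomial Finset.univ (fun k => m k j) : ℕ) : ℝ)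
            * ∏ j, ∏ k, c k j ^ m k j := by rw [hnat1, ← hnat2, hc]
      _ = (Nat.multinomial Finset.univ y : ℝ)
            * ((∏ j, (Nat.multinomial Finset.univ (fun k => m k j) : ℝ)) * ∏ j, ∏ k, c k j ^ m k j) := by
          push_cast; ring

lemma QK_eq_coeff [NeZero d] (u : Fin d → Fin d → ℝ) (hu0 : ∀ j, u 0 j = 1)
    (x n : Fin d → ℕ) (hn0 : n 0 = 0) (hle : ∑ j, n j ≤ ∑ j, x j) :
    QK d u n x = MvPolynomial.coeff
      (Finsupp.equivFunOnFinite.symm n + Finsupp.single 0 (∑ j, x j - ∑ j, n j))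
      (∏ j, (∑ k, C (u k j) * X k : MvPolynomial (Fin d) ℝ) ^ x j) := by
  have hhom := Dgen_homog u x
  have h0 : (Finsupp.equivFunOnFinite.symm n) 0 = 0 := hn0
  have hdeg : (Finsupp.equivFunOnFinite.symm n).degree = ∑ j, n j := fs_degree n
  have hkey := coeff_dehom hhom (Finsupp.equivFunOnFinite.symm n) h0 (by rw [hdeg]; exact hle)
  rw [hdeg] at hkey
  rw [← hkey]
  unfold QK
  congr 1
  rw [map_prod]
  apply Finset.prod_congr rfl
  intro j _
  rw [map_pow]
  congr 1
  rw [map_sum]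
  rw [← Finset.add_sum_erase _ _ (Finset.mem_univ 0)]
  have h1 : (aeval fun k => if k = 0 then (1 : MvPolynomial (Fin d) ℝ) else X k)
      (C (u 0 j) * X 0) = 1 := by
    rw [map_mul, aeval_C, aeval_X, if_pos rfl, hu0, algebraMap_eq, map_one, one_mul]
  rw [h1]
  congr 1
  apply Finset.sum_congr rfl
  intro k hk
  have hk0 : k ≠ 0 := (Finset.mem_erase.mp hk).1
  rw [map_mul, aeval_C, aeval_X, if_neg hk0, algebraMap_eq, mul_comm]

lemma QK_zero [NeZero d] (u : Fin d → Fin d → ℝ) (x : Fin d → ℕ) :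
    QK d u 0 x = 1 := by
  unfold QK
  have h0 : (Finsupp.equivFunOnFinite.symm (0 : Fin d → ℕ)) = 0 := by ext j; rfl
  rw [h0]
  have : ∀ F : MvPolynomial (Fin d) ℝ, MvPolynomial.coeff 0 F = constantCoeff F := fun _ => rfl
  rw [this, map_prod]
  apply Finset.prod_eq_one
  intro j _
  rw [map_pow, map_add, map_one]
  have : constantCoeff (∑ l ∈ Finset.univ.erase 0, (X l * C (u l j) : MvPolynomial (Fin d) ℝ)) = 0 := by
    rw [map_sum]
    apply Finset.sum_eq_zero
    intro l _
    rw [map_mul, constantCoeff_X, zero_mul]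
  rw [this, add_zero, one_pow]

lemma mult_single [NeZero d] (N : ℕ) :
    Nat.multinomial (Finset.univ : Finset (Fin d)) (fun j => if j = 0 then N else 0) = 1 := by
  have hspec := Nat.multinomial_spec (Finset.univ : Finset (Fin d))
    (fun j => if j = 0 then N else 0)
  have hsum : (∑ j : Fin d, if j = 0 then N else 0) = N := by
    rw [Finset.sum_ite_eq' Finset.univ (0 : Fin d) (fun _ => N)]
    simp
  have hprod : (∏ j : Fin d, (if j = 0 then N else 0)!) = N ! := by
    rw [Finset.prod_eq_single 0]
    · simp
    · intro j _ hj; simp [hj]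
    · simp
  rw [hsum, hprod] at hspec
  have := Nat.factorial_pos N
  nlinarith [hspec]

lemma prod_exp_pow [NeZero d] (t : ℝ) (ζ : Fin d → ℝ) (hζ0 : ζ 0 = 0) (ν n : Fin d → ℕ)
    (hagree : ∀ k : Fin d, k ≠ 0 → ν k = n k) :
    (∏ k, Real.exp (-t * ζ k) ^ ν k)
      = Real.exp (-t * ∑ i ∈ Finset.univ.erase 0, (n i : ℝ) * ζ i) := by
  rw [← Finset.prod_erase_mul _ _ (Finset.mem_univ (0 : Fin d))]
  have h0 : Real.exp (-t * ζ 0) ^ ν 0 = 1 := by rw [hζ0, mul_zero, Real.exp_zero, one_pow]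
  rw [h0, mul_one]
  rw [Finset.mul_sum, Real.exp_sum]
  apply Finset.prod_congr rfl
  intro k hk
  rw [← Real.exp_nat_mul, hagree k (Finset.mem_erase.mp hk).1]
  congr 1
  ring

lemma L1 [NeZero d] (p : Fin d → ℝ) (u : Fin d → Fin d → ℝ) (ζ : Fin d → ℝ) (t : ℝ)
    (x y : Fin d → ℕ) :
    compTrans d p u ζ t x y = MvPolynomial.coeff (Finsupp.equivFunOnFinite.symm y)
      (aeval (fun k => ∑ j, C (p j * u k j) * X j)
        (∏ i, (∑ k, C (Real.exp (-t * ζ k) * u k i) * X k : MvPolynomial (Fin d) ℝ) ^ x i)) := by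
  unfold compTrans
  congr 1
  rw [map_prod]
  apply Finset.prod_congr rfl
  intro i _
  rw [map_pow]
  congr 1
  rw [map_sum]
  have hterm : ∀ k : Fin d, (aeval fun k => ∑ j, C (p j * u k j) * X j)
      ((C (Real.exp (-t * ζ k) * u k i) * X k : MvPolynomial (Fin d) ℝ))
      = ∑ j, C (Real.exp (-t * ζ k) * u k i * (p j * u k j)) * X j := by
    intro k
    rw [map_mul, aeval_C, aeval_X, algebraMap_eq, Finset.mul_sum]
    apply Finset.sum_congr rfl
    intro j _
    rw [← mul_assoc, ← C_mul]
  simp_rw [hterm]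
  rw [Finset.sum_comm]
  apply Finset.sum_congr rfl
  intro j _
  rw [← Finset.sum_mul, ← map_sum]
  congr 2
  unfold oneStep
  rw [Finset.mul_sum]
  apply Finset.sum_congr rfl
  intro k _
  ring

lemma L2 [NeZero d] {N : ℕ} (T : Fin d → MvPolynomial (Fin d) ℝ) (F : MvPolynomial (Fin d) ℝ)
    (hF : F.IsHomogeneous N) (m : Fin d →₀ ℕ) :
    MvPolynomial.coeff m (aeval T F) = ∑ n ∈ Finset.Nat.antidiagonalTuple d N,
      MvPolynomial.coeff (Finsupp.equivFunOnFinite.symm n) F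
        * MvPolynomial.coeff m (∏ k, T k ^ n k) := by
  conv_lhs => rw [F.as_sum, map_sum]
  rw [coeff_sum]
  have hterm : ∀ ν : Fin d →₀ ℕ, MvPolynomial.coeff m (aeval T (monomial ν (coeff ν F)))
      = MvPolynomial.coeff ν F * MvPolynomial.coeff m (∏ k, T k ^ ν k) := by
    intro ν
    rw [aeval_monomial, Finsupp.prod_fintype _ _ (fun i => pow_zero _), algebraMap_eq,
      coeff_C_mul]
  simp_rw [hterm]
  have hmap : ∑ n ∈ Finset.Nat.antidiagonalTuple d N,
      MvPolynomial.coeff (Finsupp.equivFunOnFinite.symm n) F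
        * MvPolynomial.coeff m (∏ k, T k ^ n k)
      = ∑ ν ∈ (Finset.Nat.antidiagonalTuple d N).map
          ⟨Finsupp.equivFunOnFinite.symm, Finsupp.equivFunOnFinite.symm.injective⟩,
          MvPolynomial.coeff ν F * MvPolynomial.coeff m (∏ k, T k ^ ν k) := by
    rw [Finset.sum_map]
    rfl
  rw [hmap]
  apply Finset.sum_subset
  · intro ν hν
    rw [Finset.mem_map]
    refine ⟨Finsupp.equivFunOnFinite ν, ?_, by simp⟩
    rw [Finset.Nat.mem_antidiagonalTuple]
    have hdeg : ν.degree = N := by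
      by_contra hne
      exact (MvPolynomial.mem_support_iff.mp hν) (hF.coeff_eq_zero hne)
    rw [← hdeg, degree_eq_sum_univ]
    rfl
  · intro ν _ hν
    rw [MvPolynomial.notMem_support_iff.mp hν, zero_mul]

lemma L3 [NeZero d] (e : Fin d → ℝ) (c : Fin d → Fin d → ℝ) (x : Fin d → ℕ) (ν : Fin d →₀ ℕ) :
    MvPolynomial.coeff ν (∏ i, (∑ k, C (e k * c k i) * X k : MvPolynomial (Fin d) ℝ) ^ x i)
      = (∏ k, e k ^ ν k) *
        MvPolynomial.coeff ν (∏ i, (∑ k, C (c k i) * X k : MvPolynomial (Fin d) ℝ) ^ x i) := by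
  have hpoly : (∏ i, (∑ k, C (e k * c k i) * X k : MvPolynomial (Fin d) ℝ) ^ x i)
      = aeval (fun k => C (e k) * X k)
          (∏ i, (∑ k, C (c k i) * X k : MvPolynomial (Fin d) ℝ) ^ x i) := by
    rw [map_prod]
    apply Finset.prod_congr rfl
    intro i _
    rw [map_pow]
    congr 1
    rw [map_sum]
    apply Finset.sum_congr rfl
    intro k _
    simp only [map_mul, aeval_C, aeval_X, algebraMap_eq]
    ring
  rw [hpoly, coeff_aeval_scale]

lemma L4 [NeZero d] (a : Fin d → ℝ) (c : Fin d → Fin d → ℝ) (ν y : Fin d → ℕ) :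
    MvPolynomial.coeff (Finsupp.equivFunOnFinite.symm y)
        (∏ k, (∑ j, C (a j * c k j) * X j : MvPolynomial (Fin d) ℝ) ^ ν k)
      = (∏ j, a j ^ y j) * MvPolynomial.coeff (Finsupp.equivFunOnFinite.symm y)
        (∏ k, (∑ j, C (c k j) * X j : MvPolynomial (Fin d) ℝ) ^ ν k) := by
  have hpoly : (∏ k, (∑ j, C (a j * c k j) * X j : MvPolynomial (Fin d) ℝ) ^ ν k)
      = aeval (fun j => C (a j) * X j)
          (∏ k, (∑ j, C (c k j) * X j : MvPolynomial (Fin d) ℝ) ^ ν k) := by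
    rw [map_prod]
    apply Finset.prod_congr rfl
    intro k _
    rw [map_pow]
    congr 1
    rw [map_sum]
    apply Finset.sum_congr rfl
    intro j _
    simp only [map_mul, aeval_C, aeval_X, algebraMap_eq]
    ring
  rw [hpoly, coeff_aeval_scale]
  rfl

lemma term_eq [NeZero d] {N : ℕ} (p : Fin d → ℝ) (u : Fin d → Fin d → ℝ) (hu0 : ∀ j, u 0 j = 1)
    (ζ : Fin d → ℝ) (hζ0 : ζ 0 = 0) (t : ℝ)
    (x y : Fin d → ℕ) (hx : ∑ j, x j = N) (hy : ∑ j, y j = N)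
    (n : Fin d → ℕ) (hn0 : n 0 = 0) (hnle : ∑ j, n j ≤ N) :
    MvPolynomial.coeff
        (Finsupp.equivFunOnFinite.symm (fun j => if j = 0 then N - ∑ i, n i else n j))
        (∏ i, (∑ k, C (Real.exp (-t * ζ k) * u k i) * X k : MvPolynomial (Fin d) ℝ) ^ x i)
      * MvPolynomial.coeff (Finsupp.equivFunOnFinite.symm y)
        (∏ k, (∑ j, C (p j * u k j) * X j : MvPolynomial (Fin d) ℝ)
          ^ (if k = 0 then N - ∑ i, n i else n k))
      = multinomialPMF d p y *
          (Real.exp (-t * ∑ i ∈ Finset.univ.erase 0, (n i : ℝ) * ζ i) *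
            ((Nat.multinomial Finset.univ
                (fun j => if j = 0 then N - ∑ i, n i else n j) : ℝ))⁻¹ *
            QK d u n x * QK d u n y) := by
  set M := ∑ i, n i with hM
  set ν : Fin d → ℕ := fun j => if j = 0 then N - M else n j with hν
  have hνk : ∀ k : Fin d, k ≠ 0 → ν k = n k := by
    intro k hk; simp [hν, hk]
  have herase : ∑ j ∈ Finset.univ.erase 0, n j = M := by
    have := Finset.add_sum_erase Finset.univ n (Finset.mem_univ (0 : Fin d))
    rw [hn0, zero_add] at this
    rw [this]
  have hνsum : ∑ j, ν j = N := by
    rw [← Finset.add_sum_erase Finset.univ ν (Finset.mem_univ (0 : Fin d))]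
    have h1 : ν 0 = N - M := by simp [hν]
    have h2 : ∑ j ∈ Finset.univ.erase 0, ν j = M := by
      rw [← herase]
      exact Finset.sum_congr rfl fun j hj => hνk j (Finset.mem_erase.mp hj).1
    rw [h1, h2]
    omega
  have hfsν : Finsupp.equivFunOnFinite.symm ν
      = Finsupp.equivFunOnFinite.symm n + Finsupp.single 0 (N - M) := by
    ext j
    by_cases hj : j = 0
    · subst hj
      simp [fs_apply, hν, hn0]
    · simp [fs_apply, hν, hj, Finsupp.single_eq_of_ne (Ne.symm hj)]
  -- (a) scale out the exponentials
  have ha := L3 (fun k => Real.exp (-t * ζ k)) u x (Finsupp.equivFunOnFinite.symm ν)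
  -- (b) the product of exponentials
  have hb : (∏ k, Real.exp (-t * ζ k) ^ (Finsupp.equivFunOnFinite.symm ν) k)
      = Real.exp (-t * ∑ i ∈ Finset.univ.erase 0, (n i : ℝ) * ζ i) :=
    prod_exp_pow t ζ hζ0 ν n hνk
  -- (c) QK for x
  have hc : MvPolynomial.coeff (Finsupp.equivFunOnFinite.symm ν)
      (∏ i, (∑ k, C (u k i) * X k : MvPolynomial (Fin d) ℝ) ^ x i) = QK d u n x := by
    rw [QK_eq_coeff u hu0 x n hn0 (by omega), hfsν, hx, hM]
  -- (d) scale out p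
  have hd := L4 p u ν y
  -- (e) duality
  have he := dual_coeff u ν y (by rw [hνsum, hy])
  -- (f) QK for y
  have hf : MvPolynomial.coeff (Finsupp.equivFunOnFinite.symm ν)
      (∏ j, (∑ k, C (u k j) * X k : MvPolynomial (Fin d) ℝ) ^ y j) = QK d u n y := by
    rw [QK_eq_coeff u hu0 y n hn0 (by omega), hfsν, hy, hM]
  have hg : ((Nat.multinomial Finset.univ ν : ℕ) : ℝ) ≠ 0 := by
    exact_mod_cast (Nat.multinomial_pos _ _).ne'
  have hTu : MvPolynomial.coeff (Finsupp.equivFunOnFinite.symm y)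
      (∏ k, (∑ j, C (u k j) * X j : MvPolynomial (Fin d) ℝ) ^ ν k)
      = ((Nat.multinomial Finset.univ ν : ℝ))⁻¹
          * ((Nat.multinomial Finset.univ y : ℝ) * QK d u n y) := by
    rw [← hf, ← he, inv_mul_cancel_left₀ hg]
  have hshape : (∏ k, (∑ j, C (p j * u k j) * X j : MvPolynomial (Fin d) ℝ)
      ^ (if k = 0 then N - ∑ i, n i else n k))
      = ∏ k, (∑ j, C (p j * u k j) * X j : MvPolynomial (Fin d) ℝ) ^ ν k := rfl
  rw [hshape, hd, hTu, ha, hb, hc]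
  unfold multinomialPMF
  ring

lemma reindex [NeZero d] (N : ℕ) (f : (Fin d → ℕ) → ℝ) :
    ∑ n ∈ Finset.Nat.antidiagonalTuple d N, f n
      = ∑ M ∈ Finset.Icc 0 N,
          ∑ n ∈ (Finset.Nat.antidiagonalTuple d M).filter (fun n => n 0 = 0),
            f (fun j => if j = 0 then N - M else n j) := by
  rw [Finset.sum_sigma']
  refine Finset.sum_nbij' (fun ν => ⟨N - ν 0, fun j => if j = 0 then 0 else ν j⟩)
    (fun q => fun j => if j = 0 then N - q.1 else q.2 j) ?_ ?_ ?_ ?_ ?_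
  · intro ν hν
    rw [Finset.Nat.mem_antidiagonalTuple] at hν
    have hν0 : ν 0 ≤ N := by
      rw [← hν]
      exact Finset.single_le_sum (fun i _ => Nat.zero_le _) (Finset.mem_univ 0)
    rw [Finset.mem_sigma, Finset.mem_filter, Finset.Nat.mem_antidiagonalTuple]
    refine ⟨by simp, ?_, by simp⟩
    dsimp only
    rw [← Finset.add_sum_erase Finset.univ _ (Finset.mem_univ (0 : Fin d))]
    rw [if_pos rfl, zero_add]
    rw [Finset.sum_congr rfl (fun j hj => if_neg (Finset.mem_erase.mp hj).1)]
    have h5 : ν 0 + (Finset.univ.erase 0).sum ν = N := by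
      rw [← hν]
      exact Finset.add_sum_erase Finset.univ ν (Finset.mem_univ (0 : Fin d))
    omega
  · intro q hq
    rw [Finset.mem_sigma, Finset.mem_filter, Finset.Nat.mem_antidiagonalTuple] at hq
    obtain ⟨hM, hsum, h0⟩ := hq
    rw [Finset.mem_Icc] at hM
    beta_reduce
    rw [Finset.Nat.mem_antidiagonalTuple]
    rw [← Finset.add_sum_erase Finset.univ _ (Finset.mem_univ (0 : Fin d))]
    rw [if_pos rfl]
    have h2 : ∑ j ∈ Finset.univ.erase 0, (if j = 0 then N - q.1 else q.2 j)
        = ∑ j ∈ Finset.univ.erase 0, q.2 j := by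
      exact Finset.sum_congr rfl fun j hj => if_neg (Finset.mem_erase.mp hj).1
    have h3 : ∑ j ∈ Finset.univ.erase 0, q.2 j = q.1 := by
      have := Finset.add_sum_erase Finset.univ q.2 (Finset.mem_univ (0 : Fin d))
      rw [h0, zero_add] at this
      rw [this, hsum]
    rw [h2, h3]
    omega
  · intro ν hν
    rw [Finset.Nat.mem_antidiagonalTuple] at hν
    have hν0 : ν 0 ≤ N := by
      rw [← hν]
      exact Finset.single_le_sum (fun i _ => Nat.zero_le _) (Finset.mem_univ 0)
    beta_reduce
    funext j
    by_cases hj : j = 0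
    · subst hj; simp; omega
    · simp [hj]
  · intro q hq
    rw [Finset.mem_sigma, Finset.mem_filter, Finset.Nat.mem_antidiagonalTuple] at hq
    obtain ⟨hM, hsum, h0⟩ := hq
    rw [Finset.mem_Icc] at hM
    beta_reduce
    refine Sigma.ext ?_ (heq_of_eq ?_)
    · simp; omega
    · funext j
      by_cases hj : j = 0
      · subst hj; simp [h0]
      · simp [hj]
  · intro ν hν
    rw [Finset.Nat.mem_antidiagonalTuple] at hν
    have hν0 : ν 0 ≤ N := by
      rw [← hν]
      exact Finset.single_le_sum (fun i _ => Nat.zero_le _) (Finset.mem_univ 0)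
    congr 1
    funext j
    by_cases hj : j = 0
    · subst hj; simp; omega
    · simp [hj]

end Aux

/-- Spectral expansion of a composition Markov chain in multivariate Krawtchouk
polynomials (finite version). -/
theorem composition_chain_spectral_expansion
    (d N : ℕ) [NeZero d] (hd : 2 ≤ d)
    (p : Fin d → ℝ) (hp : ∀ j, 0 < p j) (hpsum : ∑ j, p j = 1)
    (u : Fin d → Fin d → ℝ) (hu0 : ∀ j, u 0 j = 1)
    (horth : ∀ l m, ∑ i, u l i * u m i * p i = if l = m then (1 : ℝ) else 0)
    (ζ : Fin d → ℝ) (hζ0 : ζ 0 = 0) (hζ : ∀ k, k ≠ 0 → 0 < ζ k)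
    (t : ℝ) (ht : 0 ≤ t)
    (hnonneg : ∀ i j, 0 ≤ oneStep d p u ζ t i j)
    (x y : Fin d → ℕ) (hx : ∑ j, x j = N) (hy : ∑ j, y j = N) :
    compTrans d p u ζ t x y =
      multinomialPMF d p y *
        (1 + ∑ M ∈ Finset.Icc 1 N,
          ∑ n ∈ (Finset.Nat.antidiagonalTuple d M).filter (fun n => n 0 = 0),
            Real.exp (-t * ∑ i ∈ Finset.univ.erase 0, (n i : ℝ) * ζ i) *
              ((Nat.multinomial Finset.univ
                  (fun j => if j = 0 then N - ∑ i, n i else n j) : ℝ))⁻¹ *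
              QK d u n x * QK d u n y) := by
  classical
  have hGhom : (∏ i, (∑ k, C (Real.exp (-t * ζ k) * u k i) * X k
      : MvPolynomial (Fin d) ℝ) ^ x i).IsHomogeneous N := by
    have := Dgen_homog (fun k i => Real.exp (-t * ζ k) * u k i) x
    rwa [hx] at this
  rw [L1 p u ζ t x y]
  rw [L2 _ _ hGhom]
  beta_reduce
  rw [reindex N (fun n => MvPolynomial.coeff (Finsupp.equivFunOnFinite.symm n)
      (∏ i, (∑ k, C (Real.exp (-t * ζ k) * u k i) * X k : MvPolynomial (Fin d) ℝ) ^ x i)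
    * MvPolynomial.coeff (Finsupp.equivFunOnFinite.symm y)
      (∏ k, (∑ j, C (p j * u k j) * X j : MvPolynomial (Fin d) ℝ) ^ n k))]
  rw [← Finset.add_sum_erase (Finset.Icc 0 N) _ (by simp : (0:ℕ) ∈ Finset.Icc 0 N)]
  have hIcc : (Finset.Icc 0 N).erase 0 = Finset.Icc 1 N := by
    ext m; simp; omega
  rw [hIcc]
  rw [mul_add, mul_one]
  congr 1
  · -- M = 0 term
    rw [Finset.Nat.antidiagonalTuple_zero_right, Finset.filter_singleton,
      if_pos (show (0 : Fin d → ℕ) 0 = 0 from rfl), Finset.sum_singleton]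
    have h0 := term_eq (N := N) p u hu0 ζ hζ0 t x y hx hy (0 : Fin d → ℕ) rfl (by simp)
    simp only [Pi.zero_apply, Finset.sum_const_zero, Nat.sub_zero, Nat.cast_zero, zero_mul,
      mul_zero, neg_zero, Real.exp_zero, QK_zero, mult_single, Nat.cast_one, inv_one,
      mul_one, one_mul] at h0 ⊢
    exact h0
  · -- main sum
    rw [Finset.mul_sum]
    apply Finset.sum_congr rfl
    intro M hM
    rw [Finset.mul_sum]
    apply Finset.sum_congr rfl
    intro n hn
    rw [Finset.mem_Icc] at hM
    rw [Finset.mem_filter, Finset.Nat.mem_antidiagonalTuple] at hn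
    obtain ⟨hsum, hn0⟩ := hn
    have hterm := term_eq (N := N) p u hu0 ζ hζ0 t x y hx hy n hn0 (by omega)
    rw [← hsum]
    beta_reduce
    rw [hterm]
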